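/- Let k be a field and Λ a finite-dimensional local k-algebra with radical J. Suppose u ∈ J is a nonzero element with J·u = 0. Let N be a (k,Λ)-bimodule with N·u = 0, finite-dimensional over k, and let C = [[Λ,0],[N,k]] be the triangular matrix algebra. Then the simple C-module S₁ corresponding to the idempotent e₁ = [[1,0],[0,0]] is isomorphic to a first syzygy Ω_C(X) of some finitely generated C-module X; consequently del_C(S₁) = 0. -/

import Mathlib

open MulOpposite

section Tri
variable (R S N : Type) [Ring R] [Ring S]
  [AddCommGroup N] [Module S N] [Module Rᵐᵒᵖ N] [SMulCommClass S Rᵐᵒᵖ N]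

/-- Lower triangular matrix ring [[R, 0],[N, S]]: elements (r, n, s). -/
def LTri : Type := R × N × S

instance : AddCommGroup (LTri R S N) := inferInstanceAs (AddCommGroup (R × N × S))

instance instLRing : Ring (LTri R S N) :=
  { (inferInstanceAs (AddCommGroup (R × N × S)) : AddCommGroup (R × N × S)) with
    mul := fun x y => (x.1 * y.1, op y.1 • x.2.1 + x.2.2 • y.2.1, x.2.2 * y.2.2)
    one := (1, 0, 1)
    mul_assoc := by
      rintro ⟨r,n,s⟩ ⟨r',n',s'⟩ ⟨r'',n'',s''⟩
      refine Prod.ext (mul_assoc ..) (Prod.ext ?_ (mul_assoc ..))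
      show op r'' • (op r' • n + s • n') + (s*s') • n''
          = op (r'*r'') • n + s • (op r'' • n' + s' • n'')
      simp [mul_smul, smul_add, smul_comm (M := S) (N := Rᵐᵒᵖ)]
      abel
    one_mul := by
      rintro ⟨r,n,s⟩
      refine Prod.ext (one_mul _) (Prod.ext ?_ (one_mul _))
      show op r • (0:N) + (1:S) • n = n; simp
    mul_one := by
      rintro ⟨r,n,s⟩
      refine Prod.ext (mul_one _) (Prod.ext ?_ (mul_one _))
      show op (1:R) • n + s • (0:N) = n; simp
    left_distrib := by
      rintro ⟨r,n,s⟩ ⟨r',n',s'⟩ ⟨r'',n'',s''⟩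
      refine Prod.ext (mul_add ..) (Prod.ext ?_ (mul_add ..))
      show op (r' + r'') • n + s • (n' + n'')
          = (op r' • n + s • n') + (op r'' • n + s • n'')
      simp [smul_add, add_smul]; abel
    right_distrib := by
      rintro ⟨r,n,s⟩ ⟨r',n',s'⟩ ⟨r'',n'',s''⟩
      refine Prod.ext (add_mul ..) (Prod.ext ?_ (add_mul ..))
      show op r'' • (n + n') + (s + s') • n''
          = (op r'' • n + s • n'') + (op r'' • n' + s' • n'')
      simp [smul_add, add_smul]; abel
    zero_mul := by
      rintro ⟨r,n,s⟩
      refine Prod.ext (zero_mul _) (Prod.ext ?_ (zero_mul _))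
      show op r • (0:N) + (0:S) • n = 0; simp
    mul_zero := by
      rintro ⟨r,n,s⟩
      refine Prod.ext (mul_zero _) (Prod.ext ?_ (mul_zero _))
      show op (0:R) • n + s • (0:N) = 0; simp }

/-- Build an element of the lower triangular ring from its entries. -/
def LTri.mk (r : R) (n : N) (s : S) : LTri R S N := (r, n, s)

end Tri

variable (A : Type) [Ring A]

/-- `p : P → M` is a projective cover: `P` is projective, `p` is surjective and
its kernel is superfluous (small) in `P`. -/
def IsProjCover {P M : Type} [AddCommGroup P] [Module A P]
    [AddCommGroup M] [Module A M] (p : P →ₗ[A] M) : Prop :=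
  Module.Projective A P ∧ Function.Surjective p ∧
    ∀ L : Submodule A P, LinearMap.ker p ⊔ L = ⊤ → L = ⊤

/-- `S` is a (first) syzygy of `M`: `S` is isomorphic to the kernel of a
projective cover of `M`. -/
def IsSyzygyOf (S M : ModuleCat.{0} A) : Prop :=
  ∃ (P : ModuleCat.{0} A) (p : P →ₗ[A] M),
    IsProjCover A p ∧ Nonempty (S ≃ₗ[A] LinearMap.ker p)

/-- `S` is an `n`-th syzygy of `M`, i.e. `S ≅ Ω_A^n(M)`. -/
def IsNthSyzygyOf : ℕ → ModuleCat.{0} A → ModuleCat.{0} A → Prop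
  | 0, S, M => Nonempty (S ≃ₗ[A] M)
  | n + 1, S, M => ∃ T : ModuleCat.{0} A, IsSyzygyOf A T M ∧ IsNthSyzygyOf n S T

/-- A linear map factors through a projective module. -/
def FactorsThroughProj {X Y : Type} [AddCommGroup X] [Module A X]
    [AddCommGroup Y] [Module A Y] (f : X →ₗ[A] Y) : Prop :=
  ∃ (P : ModuleCat.{0} A), Module.Projective A P ∧
    ∃ (u : X →ₗ[A] P) (v : P →ₗ[A] Y), f = v ∘ₗ u

/-- `X` is a direct summand of `Y` in the stable module category:
there are maps `i, p` with `p ∘ i = id` modulo maps factoring through projectives. -/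
def IsStableSummand (X Y : ModuleCat.{0} A) : Prop :=
  ∃ (i : X →ₗ[A] Y) (p : Y →ₗ[A] X),
    FactorsThroughProj A (p ∘ₗ i - LinearMap.id)

/-- The delooping level of a module `M`: the least `n` such that `Ω^n(M)` is a
stable direct summand of `Ω^{n+1}(N)` for some finitely generated `N`;
`∞` if no such `n` exists. -/
noncomputable def del (M : ModuleCat.{0} A) : ℕ∞ :=
  sInf {e : ℕ∞ | ∃ n : ℕ, e = (n : ℕ∞) ∧
    ∃ (N S T : ModuleCat.{0} A), Module.Finite A N ∧
      IsNthSyzygyOf A n S M ∧ IsNthSyzygyOf A (n + 1) T N ∧ IsStableSummand A S T}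

/-- The sub-derived delooping level: the infimum of `del` over all finitely
generated modules into which `M` embeds. -/
noncomputable def sddel (M : ModuleCat.{0} A) : ℕ∞ :=
  sInf {e : ℕ∞ | ∃ N : ModuleCat.{0} A, Module.Finite A N ∧
    (∃ f : M →ₗ[A] N, Function.Injective f) ∧ del A N = e}


set_option linter.unusedSectionVars false

namespace Stmt18Aux
open MulOpposite

lemma unit_of_left_inv {k Λ : Type} [Field k] [Ring Λ] [Algebra k Λ]
    [FiniteDimensional k Λ] (a x : Λ) (h : a * x = 1) : IsUnit x := by
  have hsurj : Function.Surjective (LinearMap.mulRight k x) := fun y =>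
    ⟨y * a, by simp [LinearMap.mulRight_apply, mul_assoc, h]⟩
  have hinj : Function.Injective (LinearMap.mulRight k x) :=
    (LinearMap.injective_iff_surjective).2 hsurj
  have hxa : x * a = 1 := by
    apply hinj; simp [LinearMap.mulRight_apply, mul_assoc, h]
  exact ⟨⟨x, a, hxa, h⟩, rfl⟩

lemma unit_of_right_inv {k Λ : Type} [Field k] [Ring Λ] [Algebra k Λ]
    [FiniteDimensional k Λ] (x a : Λ) (h : x * a = 1) : IsUnit x := by
  have hsurj : Function.Surjective (LinearMap.mulLeft k x) := fun y =>
    ⟨a * y, by simp [LinearMap.mulLeft_apply, ← mul_assoc, h]⟩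
  have hinj : Function.Injective (LinearMap.mulLeft k x) :=
    (LinearMap.injective_iff_surjective).2 hsurj
  have hax : a * x = 1 := by
    apply hinj; simp [LinearMap.mulLeft_apply, ← mul_assoc, h]
  exact ⟨⟨x, a, h, hax⟩, rfl⟩

lemma my_nonunits_add {k Λ : Type} [Field k] [Ring Λ] [Algebra k Λ]
    [FiniteDimensional k Λ] [IsLocalRing Λ] {a b : Λ} (ha : ¬ IsUnit a)
    (hb : ¬ IsUnit b) : ¬ IsUnit (a + b) := by
  intro h
  obtain ⟨w, hw⟩ := h
  have h1 : a * ↑w⁻¹ + b * ↑w⁻¹ = 1 := by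
    rw [← add_mul, ← hw]; exact w.mul_inv
  rcases IsLocalRing.isUnit_or_isUnit_of_add_one h1 with h2 | h2
  · obtain ⟨c, hc⟩ := h2.exists_right_inv
    exact ha (unit_of_right_inv (k := k) _ (↑w⁻¹ * c) (by rw [← mul_assoc]; exact hc))
  · obtain ⟨c, hc⟩ := h2.exists_right_inv
    exact hb (unit_of_right_inv (k := k) _ (↑w⁻¹ * c) (by rw [← mul_assoc]; exact hc))

variable {k : Type} [Field k] {Λ : Type} [Ring Λ] [Algebra k Λ]
    [FiniteDimensional k Λ] [IsLocalRing Λ]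
    {N : Type} [AddCommGroup N] [Module k N] [Module Λᵐᵒᵖ N]
    [SMulCommClass k Λᵐᵒᵖ N]

local notation "C" => LTri Λ k N

lemma mul_def (x y : C) :
    x * y = (x.1 * y.1, op y.1 • x.2.1 + x.2.2 • y.2.1, x.2.2 * y.2.2) := rfl

/-- e₁ -/
noncomputable abbrev e1 : C := LTri.mk Λ k N 1 0 0

/-- P₁ = C e₁ -/
noncomputable abbrev P1 : Submodule (LTri Λ k N) (LTri Λ k N) :=
  Submodule.span (LTri Λ k N) {LTri.mk Λ k N 1 0 0}

lemma mem_P1 (x : C) : x ∈ (P1 : Submodule C C) ↔ x.2.2 = 0 := by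
  constructor
  · intro hx
    obtain ⟨a, ha⟩ := Submodule.mem_span_singleton.1 hx
    have : (a • (e1 : C)).2.2 = x.2.2 := by rw [show a • (e1 : C) = a • LTri.mk Λ k N 1 0 0 from rfl, ha]
    rw [show (a • e1 : C) = a * e1 from rfl, mul_def] at this
    simpa [LTri.mk] using this.symm
  · intro hx
    refine Submodule.mem_span_singleton.2 ⟨x, ?_⟩
    show x * e1 = x
    rw [mul_def]
    refine Prod.ext (mul_one _) (Prod.ext ?_ ?_) <;> simp [LTri.mk, hx]

lemma e1_mem : (e1 : C) ∈ (P1 : Submodule C C) := (mem_P1 _).2 rfl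

noncomputable def e1elt : (P1 : Submodule C C) := ⟨e1, e1_mem⟩

/-- If a submodule of P₁ contains an element with unit first coordinate, it is ⊤. -/
lemma top_of_unit (L : Submodule C (P1 : Submodule C C)) (x : (P1 : Submodule C C))
    (hxL : x ∈ L) (hx : IsUnit (x : C).1) : L = ⊤ := by
  obtain ⟨v, hv⟩ := hx
  -- step 1 : (1, m, 0) ∈ L for all m
  have step1 : ∀ m : N, ∀ h, (⟨(1, m, 0), h⟩ : (P1 : Submodule C C)) ∈ L := by
    intro m h
    have hmem := L.smul_mem (LTri.mk Λ k N (↑v⁻¹) (op (↑v⁻¹ : Λ) • m) 0) hxL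
    convert hmem using 1
    apply Subtype.ext
    refine Prod.ext ?_ (Prod.ext ?_ ?_)
    · show (1 : Λ) = ↑v⁻¹ * (x : C).1
      rw [← hv]; exact (v.inv_mul).symm
    · show m = op (x : C).1 • op (↑v⁻¹ : Λ) • m + (0 : k) • (x : C).2.1
      rw [zero_smul, add_zero, ← mul_smul, ← op_mul, ← hv, v.inv_mul]
      simp
    · show (0 : k) = 0 * (x : C).2.2
      rw [zero_mul]
  -- step 2
  rw [eq_top_iff]
  rintro ⟨y, hy⟩ -
  have hy22 : y.2.2 = 0 := (mem_P1 _).1 hy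
  have h1mem : ((1 : Λ), (0 : N), (0 : k)) ∈ (P1 : Submodule C C) := (mem_P1 _).2 rfl
  have hmem := L.smul_mem (LTri.mk Λ k N y.1 y.2.1 0) (step1 0 h1mem)
  convert hmem using 1
  apply Subtype.ext
  refine Prod.ext ?_ (Prod.ext ?_ ?_)
  · exact (mul_one _).symm
  · show y.2.1 = op (1 : Λ) • y.2.1 + (0 : k) • (0 : N)
    simp
  · show y.2.2 = (0 : k) * (0 : k)
    rw [hy22, zero_mul]

/-- The radical of P₁: elements whose first coordinate is a nonunit. -/
noncomputable def M0 : Submodule C (P1 : Submodule C C) where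
  carrier := {x | ¬ IsUnit (x : C).1}
  add_mem' := by
    intro a b ha hb
    have ha' : ¬ IsUnit (↑a : C).1 := ha
    have hb' : ¬ IsUnit (↑b : C).1 := hb
    exact my_nonunits_add (k := k) ha' hb'
  zero_mem' := by
    show ¬ IsUnit ((0 : C)).1
    show ¬ IsUnit (0 : Λ)
    rw [isUnit_zero_iff]
    exact zero_ne_one
  smul_mem' := by
    intro c x hx hcx
    apply hx
    have hcx' : IsUnit (c.1 * (x : C).1) := hcx
    obtain ⟨w, hw⟩ := hcx'
    have h1 : ((↑w⁻¹ : Λ) * c.1) * (x : C).1 = 1 := by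
      rw [mul_assoc, ← hw]; exact w.inv_mul
    exact unit_of_left_inv (k := k) _ _ h1

lemma e1elt_not_mem_M0 : (e1elt : (P1 : Submodule C C)) ∉ (M0 : Submodule C (P1 : Submodule C C)) :=
  fun h => h isUnit_one

lemma M0_coatom : IsCoatom (M0 : Submodule C (P1 : Submodule C C)) := by
  constructor
  · intro h
    exact e1elt_not_mem_M0 (h ▸ Submodule.mem_top)
  · intro L hL
    obtain ⟨x, hxL, hxM⟩ := SetLike.exists_of_lt hL
    exact top_of_unit L x hxL (not_not.1 hxM)

lemma coatom_eq_M0 (m : Submodule C (P1 : Submodule C C)) (hm : IsCoatom m) : m = M0 := by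
  by_cases h : m ≤ M0
  · rcases lt_or_eq_of_le h with h' | h'
    · exact absurd (hm.2 _ h') M0_coatom.1
    · exact h'
  · obtain ⟨x, hxm, hxM⟩ := SetLike.not_le_iff_exists.1 h
    exact absurd (top_of_unit m x hxm (not_not.1 hxM)) hm.1

lemma sInf_coatoms :
    sInf {m : Submodule C (P1 : Submodule C C) | IsCoatom m} = M0 := by
  have : {m : Submodule C (P1 : Submodule C C) | IsCoatom m} = {M0} := by
    ext m
    exact ⟨fun h => coatom_eq_M0 m h, fun h => h ▸ M0_coatom⟩
  rw [this, sInf_singleton]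

/-- Right multiplication by an element of P₁, as a C-linear map C → P₁. -/
noncomputable def rmulP (w : C) (hw : w.2.2 = 0) : C →ₗ[C] (P1 : Submodule C C) where
  toFun c := ⟨c * w, (mem_P1 _).2 (by show c.2.2 * w.2.2 = 0; rw [hw, mul_zero])⟩
  map_add' a b := Subtype.ext (add_mul a b w)
  map_smul' c a := Subtype.ext (mul_assoc c a w)


/-- P₁ is projective. -/
lemma P1_proj : Module.Projective (LTri Λ k N) (P1 : Submodule C C) := by
  refine Module.Projective.of_split (M := C) (Submodule.subtype _) (rmulP e1 rfl) ?_
  ext x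
  have hx22 : (x : C).2.2 = 0 := (mem_P1 _).1 x.2
  show ((x : C) * e1 : C) = (x : C)
  rw [mul_def]
  refine Prod.ext (mul_one _) (Prod.ext ?_ ?_) <;> simp [LTri.mk, hx22]

variable (u : Λ)

/-- The syzygy map: right multiplication by (u,0,0) on P₁. -/
noncomputable def fU : (P1 : Submodule C C) →ₗ[C] (P1 : Submodule C C) :=
  (rmulP (LTri.mk Λ k N u 0 0) rfl).comp (Submodule.subtype _)

lemma fU_apply (hNu : ∀ n : N, op u • n = 0) (x : (P1 : Submodule C C)) :
    ((fU u x : C)) = LTri.mk Λ k N ((x : C).1 * u) 0 0 := by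
  refine Prod.ext ?_ (Prod.ext ?_ ?_)
  · rfl
  · show op u • (x : C).2.1 + (x : C).2.2 • (0 : N) = 0
    rw [hNu, smul_zero, add_zero]
  · show (x : C).2.2 * 0 = 0
    rw [mul_zero]

lemma ker_fU (hu0 : u ≠ 0) (hJu : ∀ a : Λ, ¬ IsUnit a → a * u = 0)
    (hNu : ∀ n : N, op u • n = 0) :
    LinearMap.ker (fU u) = (M0 : Submodule C (P1 : Submodule C C)) := by
  have hle : (M0 : Submodule C (P1 : Submodule C C)) ≤ LinearMap.ker (fU u) := by
    intro x hx
    rw [LinearMap.mem_ker]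
    apply Subtype.ext
    rw [fU_apply u hNu]
    have h0 : (x : C).1 * u = 0 := hJu _ hx
    rw [h0]
    rfl
  have hne : LinearMap.ker (fU (k := k) (N := N) u) ≠ ⊤ := by
    intro h
    have h1 : fU (k := k) (N := N) u e1elt = 0 := by
      rw [← LinearMap.mem_ker, h]; trivial
    have hval := congrArg (Subtype.val) h1
    rw [fU_apply u hNu] at hval
    have h2 := congrArg Prod.fst hval
    apply hu0
    rw [← one_mul u]
    exact h2
  rcases lt_or_eq_of_le hle with h | h
  · exact absurd (M0_coatom.2 _ h) hne
  · exact h.symm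

lemma fU_range_small (huJ : ¬ IsUnit u) (hNu : ∀ n : N, op u • n = 0)
    (L : Submodule C (P1 : Submodule C C))
    (hL : LinearMap.range (fU u) ⊔ L = ⊤) : L = ⊤ := by
  have he : (e1elt : (P1 : Submodule C C)) ∈ LinearMap.range (fU u) ⊔ L :=
    hL ▸ Submodule.mem_top
  obtain ⟨y, hy, z, hz, hyz⟩ := Submodule.mem_sup.1 he
  obtain ⟨x0, hx0⟩ := hy
  apply top_of_unit L z hz
  have hsum : (y : C).1 + (z : C).1 = 1 := by
    have := congrArg (fun w : (P1 : Submodule C C) => (w : C).1) hyz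
    exact this
  have hy1 : (y : C).1 = (x0 : C).1 * u := by
    rw [← hx0]
    exact congrArg Prod.fst (fU_apply u hNu x0)
  have ht : ¬ IsUnit ((x0 : C).1 * u) := by
    intro h
    obtain ⟨c, hc⟩ := h.exists_left_inv
    rw [← mul_assoc] at hc
    exact huJ (unit_of_left_inv (k := k) _ _ hc)
  rcases IsLocalRing.isUnit_or_isUnit_of_add_one hsum with h | h
  · rw [hy1] at h
    exact absurd h ht
  · exact h

end Stmt18Aux
theorem stmt18 (k : Type) [Field k] (Λ : Type) [Ring Λ] [Algebra k Λ]
    [FiniteDimensional k Λ] [IsLocalRing Λ]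
    -- u is a nonzero element of the radical J (= the set of nonunits) with J·u = 0
    (u : Λ) (hu0 : u ≠ 0) (huJ : ¬ IsUnit u)
    (hJu : ∀ a : Λ, ¬ IsUnit a → a * u = 0)
    -- N is a (k,Λ)-bimodule, finite-dimensional over k, with N·u = 0
    (N : Type) [AddCommGroup N] [Module k N] [Module Λᵐᵒᵖ N]
    [SMulCommClass k Λᵐᵒᵖ N] [FiniteDimensional k N]
    (hNu : ∀ n : N, MulOpposite.op u • n = 0) :
    -- For C = [[Λ,0],[N,k]], the simple top S₁ of P₁ = C·e₁ is a first syzygy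
    -- of some finitely generated C-module X; consequently del_C(S₁) = 0.
    (∃ X : ModuleCat.{0} (LTri Λ k N), Module.Finite (LTri Λ k N) X ∧
      IsSyzygyOf (LTri Λ k N)
        (ModuleCat.of (LTri Λ k N)
          (Submodule.span (LTri Λ k N) {LTri.mk Λ k N 1 0 0} ⧸
            sInf {m : Submodule (LTri Λ k N)
              (Submodule.span (LTri Λ k N) {LTri.mk Λ k N 1 0 0}) | IsCoatom m}))
        X) ∧
    del (LTri Λ k N)
      (ModuleCat.of (LTri Λ k N)
        (Submodule.span (LTri Λ k N) {LTri.mk Λ k N 1 0 0} ⧸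
          sInf {m : Submodule (LTri Λ k N)
            (Submodule.span (LTri Λ k N) {LTri.mk Λ k N 1 0 0}) | IsCoatom m})) = 0 := by
  classical
  let f := Stmt18Aux.fU (k := k) (Λ := Λ) (N := N) u
  let U := LinearMap.range f
  let X : ModuleCat.{0} (LTri Λ k N) := ModuleCat.of (LTri Λ k N)
    ((Stmt18Aux.P1 (k := k) (Λ := Λ) (N := N) : Submodule _ _) ⧸ U)
  let S1 : ModuleCat.{0} (LTri Λ k N) := ModuleCat.of (LTri Λ k N)
    (Submodule.span (LTri Λ k N) {LTri.mk Λ k N 1 0 0} ⧸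
      sInf {m : Submodule (LTri Λ k N)
        (Submodule.span (LTri Λ k N) {LTri.mk Λ k N 1 0 0}) | IsCoatom m})
  have hfin : Module.Finite (LTri Λ k N) X :=
    inferInstanceAs (Module.Finite (LTri Λ k N)
      ((Stmt18Aux.P1 (k := k) (Λ := Λ) (N := N) : Submodule _ _) ⧸ U))
  have hcover : IsProjCover (LTri Λ k N) (U.mkQ) := by
    refine ⟨Stmt18Aux.P1_proj (k := k) (Λ := Λ) (N := N), Submodule.mkQ_surjective U, ?_⟩
    intro L hL
    exact Stmt18Aux.fU_range_small (k := k) u huJ hNu L (by rwa [Submodule.ker_mkQ] at hL)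
  have heq : Nonempty ((↑S1) ≃ₗ[LTri Λ k N] LinearMap.ker U.mkQ) := by
    have eA := Submodule.quotEquivOfEq _ _
      ((Stmt18Aux.sInf_coatoms (k := k) (Λ := Λ) (N := N)).trans (Stmt18Aux.ker_fU (k := k) u hu0 hJu hNu).symm)
    have eB := f.quotKerEquivRange
    have eC := LinearEquiv.ofEq _ _ (Submodule.ker_mkQ U).symm
    exact ⟨(eA.trans eB).trans eC⟩
  have hsyz : IsSyzygyOf (LTri Λ k N) S1 X :=
    ⟨ModuleCat.of (LTri Λ k N) (Stmt18Aux.P1 (k := k) (Λ := Λ) (N := N) : Submodule _ _),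
      U.mkQ, hcover, heq⟩
  refine ⟨⟨X, hfin, hsyz⟩, ?_⟩
  apply le_antisymm
  · apply sInf_le
    refine ⟨0, by simp, X, S1, S1, hfin, ?_, ?_, ?_⟩
    · exact ⟨LinearEquiv.refl _ _⟩
    · exact ⟨S1, hsyz, ⟨LinearEquiv.refl _ _⟩⟩
    · exact ⟨LinearMap.id, LinearMap.id,
        @ModuleCat.of (LTri Λ k N) _ (LTri Λ k N) Ring.toAddCommGroup Semiring.toModule,
        @Module.Projective.of_free (LTri Λ k N) _ (LTri Λ k N) _ Semiring.toModule (Module.Free.self _), 0, 0, by simp⟩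
  · exact zero_le
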